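/- Under the hypotheses of the noisy monotonicity lemma, the stopping index n_δ defined as the first integer n with αₙ⟨(αₙI+AA*)^{-1}(Axₙ^δ - y^δ), Axₙ^δ - y^δ⟩ ≤ τ²δ² is finite, and satisfies the a priori estimate c₃ δ² ∑_{n=0}^{n_δ - 1} 1/αₙ ≤ D_{ξ₀}Θ(x̂, x₀), where c₃ = (1 - 1/τ - μ₀/(4c₀)) min{μ₀, μ₁} τ² and x̂ is any solution of Ax = y in dom(Θ). -/

import Mathlib

open scoped InnerProductSpace
open ContinuousLinearMap

private lemma op_key {X Y : Type*} [NormedAddCommGroup X] [InnerProductSpace ℝ X] [CompleteSpace X]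
    [NormedAddCommGroup Y] [InnerProductSpace ℝ Y] [CompleteSpace Y]
    (A : X →L[ℝ] Y) (S B : Y →L[ℝ] Y) (a : ℝ)
    (hSsa : IsSelfAdjoint S)
    (hSsq : S ∘L S = a • (1 : Y →L[ℝ] Y) + A ∘L ContinuousLinearMap.adjoint A)
    (hSB : S ∘L B = 1) (r : Y) :
    a * ‖B (B r)‖^2 + ‖ContinuousLinearMap.adjoint A (B (B r))‖^2 = ⟪B (B r), r⟫_ℝ
    ∧ a • (B (B r)) + A (ContinuousLinearMap.adjoint A (B (B r))) = r := by
  have hSBv : ∀ v, S (B v) = v := fun v => by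
    have := congrArg (fun T : Y →L[ℝ] Y => T v) hSB; simpa using this
  have hS2 : ∀ v, S (S v) = a • v + A (ContinuousLinearMap.adjoint A v) := fun v => by
    have := congrArg (fun T : Y →L[ℝ] Y => T v) hSsq; simpa using this
  have hBadj : ContinuousLinearMap.adjoint B = B := by
    have h1 : ContinuousLinearMap.adjoint B ∘L S = 1 := by
      have := congrArg ContinuousLinearMap.adjoint hSB
      rw [ContinuousLinearMap.adjoint_comp, hSsa.adjoint_eq] at this
      simpa [ContinuousLinearMap.one_def, ContinuousLinearMap.adjoint_id] using this
    calc ContinuousLinearMap.adjoint B = ContinuousLinearMap.adjoint B ∘L (S ∘L B) := by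
          rw [hSB]; ext v; simp
      _ = (ContinuousLinearMap.adjoint B ∘L S) ∘L B := by rw [ContinuousLinearMap.comp_assoc]
      _ = B := by rw [h1]; ext v; simp
  have hBs : ∀ u v : Y, ⟪B u, v⟫_ℝ = ⟪u, B v⟫_ℝ := fun u v => by
    rw [← hBadj, ContinuousLinearMap.adjoint_inner_left, hBadj]
  have hSs : ∀ u v : Y, ⟪S u, v⟫_ℝ = ⟪u, S v⟫_ℝ := fun u v => by
    rw [← hSsa.adjoint_eq, ContinuousLinearMap.adjoint_inner_left, hSsa.adjoint_eq]
  have hSv2 : ∀ v : Y, ⟪S v, S v⟫_ℝ = a * ‖v‖^2 + ‖ContinuousLinearMap.adjoint A v‖^2 := by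
    intro v
    rw [hSs v (S v), hS2 v, inner_add_right, real_inner_smul_right,
      ← ContinuousLinearMap.adjoint_inner_left A, real_inner_self_eq_norm_sq,
      real_inner_self_eq_norm_sq]
  constructor
  · have e1 := hSv2 (B (B r))
    rw [hSBv (B r)] at e1
    rw [← e1]
    exact (hBs (B r) r).symm
  · have : r = S (S (B (B r))) := by rw [hSBv (B r), hSBv r]
    rw [hS2] at this
    exact this.symm

private lemma subgrad_strong {X : Type*} [NormedAddCommGroup X] [InnerProductSpace ℝ X]
    (Θ : X → EReal) (c₀ : ℝ) (hc₀ : 0 < c₀) (hbot : ∀ z, Θ z ≠ ⊥)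
    (hsc : ∀ (z x : X) (s : ℝ), 0 ≤ s → s ≤ 1 →
      Θ (s • z + (1 - s) • x) + ((c₀ * s * (1 - s) * ‖z - x‖ ^ 2 : ℝ) : EReal)
        ≤ (s : EReal) * Θ z + ((1 - s : ℝ) : EReal) * Θ x)
    (ζ x0 : X)
    (hmin : ∀ z, Θ x0 - ((⟪ζ, x0⟫_ℝ : ℝ) : EReal) ≤ Θ z - ((⟪ζ, z⟫_ℝ : ℝ) : EReal))
    (z : X) (vz v0 : ℝ) (hz : Θ z = (vz : EReal)) (h0 : Θ x0 = (v0 : EReal)) :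
    v0 + ⟪ζ, z - x0⟫_ℝ + c₀ * ‖z - x0‖ ^ 2 ≤ vz := by
  have hQ : (0:ℝ) ≤ ‖z - x0‖ ^ 2 := sq_nonneg _
  have key : ∀ s : ℝ, 0 < s → s < 1 →
      ⟪ζ, z - x0⟫_ℝ + c₀ * (1 - s) * ‖z - x0‖ ^ 2 ≤ vz - v0 := by
    intro s hs0 hs1
    have hcs := hsc z x0 s hs0.le hs1.le
    rw [hz, h0] at hcs
    rw [show (s:EReal) * (vz:EReal) + ((1-s:ℝ):EReal) * (v0:EReal)
        = ((s*vz + (1-s)*v0 : ℝ):EReal) from by norm_cast] at hcs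
    have hwt : Θ (s • z + (1 - s) • x0) ≠ ⊤ := by
      intro h
      rw [h, EReal.top_add_of_ne_bot (EReal.coe_ne_bot _)] at hcs
      exact (EReal.coe_ne_top _) (top_le_iff.mp hcs)
    have hwr : Θ (s • z + (1 - s) • x0)
        = (((Θ (s • z + (1 - s) • x0)).toReal : ℝ) : EReal) :=
      (EReal.coe_toReal hwt (hbot _)).symm
    set vw := (Θ (s • z + (1 - s) • x0)).toReal with hvw
    rw [hwr] at hcs
    have hcsR : vw + c₀ * s * (1 - s) * ‖z - x0‖ ^ 2 ≤ s * vz + (1 - s) * v0 := by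
      exact_mod_cast hcs
    have hm := hmin (s • z + (1 - s) • x0)
    rw [h0, hwr, ← EReal.coe_sub, ← EReal.coe_sub] at hm
    have hmR : v0 - ⟪ζ, x0⟫_ℝ ≤ vw - ⟪ζ, s • z + (1 - s) • x0⟫_ℝ := by exact_mod_cast hm
    have hiw : ⟪ζ, s • z + (1 - s) • x0⟫_ℝ = s * ⟪ζ, z⟫_ℝ + (1 - s) * ⟪ζ, x0⟫_ℝ := by
      rw [inner_add_right, real_inner_smul_right, real_inner_smul_right]
    rw [hiw] at hmR
    have hsub : ⟪ζ, z - x0⟫_ℝ = ⟪ζ, z⟫_ℝ - ⟪ζ, x0⟫_ℝ := inner_sub_right ζ z x0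
    have hmul : s * (⟪ζ, z - x0⟫_ℝ + c₀ * (1 - s) * ‖z - x0‖ ^ 2) ≤ s * (vz - v0) := by
      rw [hsub]; nlinarith [hcsR, hmR]
    have := (mul_le_mul_iff_right₀ hs0).mp hmul
    linarith
  apply le_of_forall_pos_le_add
  intro ε hε
  have hden : 0 < c₀ * ‖z - x0‖ ^ 2 + 1 := by positivity
  set s := min (1/2) (ε / (c₀ * ‖z - x0‖ ^ 2 + 1)) with hs
  have hs0 : 0 < s := lt_min (by norm_num) (div_pos hε hden)
  have hs1 : s < 1 := lt_of_le_of_lt (min_le_left _ _) (by norm_num)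
  have hk := key s hs0 hs1
  have hsd : s ≤ ε / (c₀ * ‖z - x0‖ ^ 2 + 1) := min_le_right _ _
  have hse : s * (c₀ * ‖z - x0‖ ^ 2 + 1) ≤ ε := by
    rw [← div_mul_cancel₀ ε hden.ne']
    exact mul_le_mul_of_nonneg_right hsd hden.le
  nlinarith [hk, hse, hs0, hQ, hc₀, mul_nonneg (mul_nonneg hc₀.le hs0.le) hQ]
set_option maxHeartbeats 1000000 in
theorem stopping_index_finite_and_estimate
    {X Y : Type*} [NormedAddCommGroup X] [InnerProductSpace ℝ X] [CompleteSpace X]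
    [NormedAddCommGroup Y] [InnerProductSpace ℝ Y] [CompleteSpace Y]
    (Θ : X → EReal) (c₀ : ℝ) (hc₀ : 0 < c₀)
    (hproper : (∀ z, Θ z ≠ ⊥) ∧ ∃ z, Θ z ≠ ⊤)
    (hlsc : LowerSemicontinuous Θ)
    (hsc : ∀ (z x : X) (s : ℝ), 0 ≤ s → s ≤ 1 →
      Θ (s • z + (1 - s) • x) + ((c₀ * s * (1 - s) * ‖z - x‖ ^ 2 : ℝ) : EReal)
        ≤ (s : EReal) * Θ z + ((1 - s : ℝ) : EReal) * Θ x)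
    (A : X →L[ℝ] Y) (y yδ : Y) (δ : ℝ) (hδ : 0 < δ) (hnoise : ‖yδ - y‖ ≤ δ)
    (τ : ℝ) (hτ : 1 < τ)
    (α : ℕ → ℝ) (hαpos : ∀ n, 0 < α n) (hαdec : ∀ n, α (n + 1) ≤ α n)
    (S B : ℕ → (Y →L[ℝ] Y))
    (hSsa : ∀ n, IsSelfAdjoint (S n))
    (hSpos : ∀ n, ∀ w : Y, 0 ≤ ⟪S n w, w⟫_ℝ)
    (hSsq : ∀ n, S n ∘L S n = α n • (1 : Y →L[ℝ] Y) + A ∘L ContinuousLinearMap.adjoint A)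
    (hBS : ∀ n, B n ∘L S n = 1) (hSB : ∀ n, S n ∘L B n = 1)
    (μ₀ μ₁ : ℝ) (hμ₀ : 0 < μ₀) (hμ₀' : μ₀ < 4 * c₀ * (1 - 1 / τ)) (hμ₁ : 0 < μ₁)
    (ξ x : ℕ → X) (t : ℕ → ℝ)
    (hargmin : ∀ n, ∀ z : X,
      Θ (x n) - ((⟪ξ n, x n⟫_ℝ : ℝ) : EReal) ≤ Θ z - ((⟪ξ n, z⟫_ℝ : ℝ) : EReal))
    (ht : ∀ n, t n = min (μ₀ * ⟪B n (B n (A (x n) - yδ)), A (x n) - yδ⟫_ℝ /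
      ‖ContinuousLinearMap.adjoint A (B n (B n (A (x n) - yδ)))‖ ^ 2) μ₁)
    (hiter : ∀ n, ξ (n + 1)
      = ξ n - t n • ContinuousLinearMap.adjoint A (B n (B n (A (x n) - yδ))))
    (hex : ∃ xhat : X, A xhat = y ∧ Θ xhat ≠ ⊤) :
    ∃ nδ : ℕ,
      (α nδ * ⟪B nδ (B nδ (A (x nδ) - yδ)), A (x nδ) - yδ⟫_ℝ ≤ τ ^ 2 * δ ^ 2) ∧
      (∀ n < nδ, ¬ (α n * ⟪B n (B n (A (x n) - yδ)), A (x n) - yδ⟫_ℝ ≤ τ ^ 2 * δ ^ 2)) ∧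
      ∀ (xhat : X), A xhat = y → Θ xhat ≠ ⊤ →
        ((((1 - 1 / τ - μ₀ / (4 * c₀)) * min μ₀ μ₁ * τ ^ 2) * δ ^ 2
            * ∑ n ∈ Finset.range nδ, 1 / α n : ℝ) : EReal)
          ≤ Θ xhat - Θ (x 0) - ((⟪ξ 0, xhat - x 0⟫_ℝ : ℝ) : EReal) := by
  classical
  obtain ⟨hbot, -⟩ := hproper
  obtain ⟨xh₀, hAxh₀, hxh₀⟩ := hex
  have hτ0 : (0:ℝ) < τ := lt_trans one_pos hτ
  -- finiteness of Θ (x n)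
  have hfin : ∀ n, Θ (x n) ≠ ⊤ := by
    intro n h
    have h2 := hargmin n xh₀
    have hw : Θ xh₀ = (((Θ xh₀).toReal : ℝ) : EReal) := (EReal.coe_toReal hxh₀ (hbot _)).symm
    rw [h, hw, ← EReal.coe_sub, EReal.top_sub_coe] at h2
    exact (EReal.coe_ne_top _) (top_le_iff.mp h2)
  set v : ℕ → ℝ := fun n => (Θ (x n)).toReal with hvdef
  have hv : ∀ n, Θ (x n) = ((v n : ℝ) : EReal) := fun n =>
    (EReal.coe_toReal (hfin n) (hbot _)).symm
  have hargminR : ∀ n (z : X) (vz : ℝ), Θ z = (vz : EReal) →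
      v n - ⟪ξ n, x n⟫_ℝ ≤ vz - ⟪ξ n, z⟫_ℝ := by
    intro n z vz hz
    have h := hargmin n z
    rw [hv n, hz, ← EReal.coe_sub, ← EReal.coe_sub] at h
    exact_mod_cast h
  -- positivity of c₂ = 1 - 1/τ - μ₀/(4c₀)
  have h4c : (0:ℝ) < 4*c₀ := by linarith
  have hc₂ : 0 < 1 - 1/τ - μ₀/(4*c₀) := by
    have h' : μ₀ / (4*c₀) < 1 - 1/τ := by
      rw [div_lt_iff₀ h4c]; nlinarith [hμ₀']
    linarith
  have hmin01 : (0:ℝ) < min μ₀ μ₁ := lt_min hμ₀ hμ₁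
  -- the main summed estimate
  have main : ∀ (xh : X) (vh : ℝ), A xh = y → Θ xh = (vh : EReal) → ∀ N : ℕ,
      (∀ n < N, ¬ (α n * ⟪B n (B n (A (x n) - yδ)), A (x n) - yδ⟫_ℝ ≤ τ ^ 2 * δ ^ 2)) →
      ((1 - 1 / τ - μ₀ / (4 * c₀)) * min μ₀ μ₁ * τ ^ 2) * δ ^ 2
          * ∑ n ∈ Finset.range N, 1 / α n
        ≤ (vh - v 0 - ⟪ξ 0, xh - x 0⟫_ℝ) - (vh - v N - ⟪ξ N, xh - x N⟫_ℝ) := by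
    intro xh vh hAxh hvh
    -- single step estimate
    have step : ∀ n, ¬ (α n * ⟪B n (B n (A (x n) - yδ)), A (x n) - yδ⟫_ℝ ≤ τ ^ 2 * δ ^ 2) →
        ((1 - 1 / τ - μ₀ / (4 * c₀)) * min μ₀ μ₁ * τ ^ 2) * δ ^ 2 * (1 / α n)
          ≤ (vh - v n - ⟪ξ n, xh - x n⟫_ℝ) - (vh - v (n+1) - ⟪ξ (n+1), xh - x (n+1)⟫_ℝ) := by
      intro n hPn
      rw [not_le] at hPn
      obtain ⟨heq, hdeg⟩ := op_key A (S n) (B n) (α n) (hSsa n) (hSsq n) (hSB n) (A (x n) - yδ)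
      obtain ⟨r, hr⟩ : ∃ r' : Y, r' = A (x n) - yδ := ⟨_, rfl⟩
      rw [← hr] at heq hdeg hPn
      obtain ⟨s, hsdef⟩ : ∃ s' : Y, s' = B n (B n r) := ⟨_, rfl⟩
      rw [← hsdef] at heq hdeg hPn
      obtain ⟨u, hu⟩ : ∃ u' : X, u' = ContinuousLinearMap.adjoint A s := ⟨_, rfl⟩
      rw [← hu] at heq hdeg
      obtain ⟨dn, hdn⟩ : ∃ d' : ℝ, d' = ⟪s, r⟫_ℝ := ⟨_, rfl⟩
      rw [← hdn] at heq hPn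
      have hαn := hαpos n
      have hτδ : (0:ℝ) < τ^2 * δ^2 := by positivity
      have hd_pos : 0 < dn := by
        by_contra h
        push_neg at h
        nlinarith [mul_nonneg hαn.le (neg_nonneg.mpr h)]
      have hs2 : α n * ‖s‖^2 ≤ dn := by nlinarith [heq, sq_nonneg ‖u‖]
      have hu2 : ‖u‖^2 ≤ dn := by nlinarith [heq, mul_nonneg hαn.le (sq_nonneg ‖s‖)]
      have hu_ne : u ≠ 0 := by
        intro h0
        have hr_eq : α n • s = r := by
          have h1 := hdeg
          rw [h0] at h1
          simpa using h1
        have hAr : ContinuousLinearMap.adjoint A r = 0 := by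
          rw [← hr_eq, map_smul, ← hu, h0, smul_zero]
        have hperp : ⟪r, A (x n) - A xh⟫_ℝ = 0 := by
          rw [← map_sub, real_inner_comm, ← ContinuousLinearMap.adjoint_inner_right, hAr,
            inner_zero_right]
        have h2 : ⟪r, r - (y - yδ)⟫_ℝ = 0 := by
          have he : r - (y - yδ) = A (x n) - A xh := by rw [hr, hAxh]; abel
          rw [he, hperp]
        rw [inner_sub_right] at h2
        have h3 : ⟪r, y - yδ⟫_ℝ ≤ ‖r‖ * δ := by
          calc ⟪r, y - yδ⟫_ℝ ≤ ‖r‖ * ‖y - yδ‖ := real_inner_le_norm r _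
            _ ≤ ‖r‖ * δ := by
                have : ‖y - yδ‖ ≤ δ := by rwa [norm_sub_rev] at hnoise
                exact mul_le_mul_of_nonneg_left this (norm_nonneg r)
        have h4 : α n * dn = ‖r‖^2 := by
          rw [hdn]
          calc α n * ⟪s, r⟫_ℝ = ⟪α n • s, r⟫_ℝ := (real_inner_smul_left s r (α n)).symm
            _ = ⟪r, r⟫_ℝ := by rw [hr_eq]
            _ = ‖r‖^2 := real_inner_self_eq_norm_sq r
        have h5 : τ^2*δ^2 < ‖r‖^2 := h4 ▸ hPn
        have h6 : ‖r‖^2 ≤ ‖r‖ * δ := by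
          rw [← real_inner_self_eq_norm_sq]; linarith [h2, h3]
        nlinarith [h5, h6, sq_nonneg (‖r‖ - δ), mul_pos hδ hδ,
          mul_pos (sub_pos.mpr hτ) (by linarith : (0:ℝ) < τ + 1)]
      have hu2pos : 0 < ‖u‖^2 := pow_pos (norm_pos_iff.mpr hu_ne) 2
      have htn : t n = min (μ₀ * dn / ‖u‖^2) μ₁ := by
        rw [hu, hdn, hsdef, hr]
        exact ht n
      have ht0 : 0 ≤ t n := by
        rw [htn]
        exact le_min (by positivity) hμ₁.le
      have htlb : min μ₀ μ₁ ≤ t n := by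
        rw [htn]
        apply min_le_min _ le_rfl
        rw [le_div_iff₀ hu2pos]
        nlinarith [hu2, hμ₀]
      have htub : t n * ‖u‖^2 ≤ μ₀ * dn := by
        rw [htn]
        calc min (μ₀*dn/‖u‖^2) μ₁ * ‖u‖^2 ≤ (μ₀*dn/‖u‖^2) * ‖u‖^2 :=
              mul_le_mul_of_nonneg_right (min_le_left _ _) (sq_nonneg _)
          _ = μ₀ * dn := div_mul_cancel₀ _ hu2pos.ne'
      have hδs : δ * ‖s‖ ≤ dn / τ := by
        have h1 : ‖s‖^2 ≤ dn / α n := by rw [le_div_iff₀ hαn]; nlinarith [hs2]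
        have h2 : δ^2 ≤ α n * dn / τ^2 := by
          rw [le_div_iff₀ (by positivity : (0:ℝ) < τ^2)]; nlinarith [hPn]
        have hA2 : (δ*‖s‖)^2 ≤ (dn/τ)^2 := by
          calc (δ*‖s‖)^2 = δ^2 * ‖s‖^2 := by ring
            _ ≤ (α n * dn/τ^2) * (dn/α n) := by
                apply mul_le_mul h2 h1 (sq_nonneg _) (by positivity)
            _ = (dn/τ)^2 := by field_simp
        have h3 := Real.sqrt_le_sqrt hA2
        rwa [Real.sqrt_sq (by positivity), Real.sqrt_sq (by positivity)] at h3
      -- strong convexity at step n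
      have hDloc := subgrad_strong Θ c₀ hc₀ hbot hsc (ξ n) (x n) (hargmin n)
        (x (n+1)) (v (n+1)) (v n) (hv (n+1)) (hv n)
      -- algebraic identity for the dual update
      have hiden : ⟪ξ (n+1), xh - x (n+1)⟫_ℝ - ⟪ξ n, xh - x n⟫_ℝ
          = -⟪ξ n, x (n+1) - x n⟫_ℝ - t n * ⟪s, y - yδ⟫_ℝ
            + t n * ⟪u, x (n+1) - x n⟫_ℝ + t n * dn := by
        rw [hdn, hu, hsdef, hr, hiter n]
        simp only [inner_sub_left, inner_sub_right, real_inner_smul_left, map_sub,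
          ContinuousLinearMap.adjoint_inner_left, hAxh]
        ring
      -- bounds
      have hb1 : t n * ⟪s, y - yδ⟫_ℝ ≤ t n * (dn / τ) := by
        apply mul_le_mul_of_nonneg_left _ ht0
        calc ⟪s, y - yδ⟫_ℝ ≤ ‖s‖ * ‖y - yδ‖ := real_inner_le_norm s _
          _ ≤ ‖s‖ * δ := by
              have : ‖y - yδ‖ ≤ δ := by rwa [norm_sub_rev] at hnoise
              exact mul_le_mul_of_nonneg_left this (norm_nonneg s)
          _ = δ * ‖s‖ := mul_comm _ _
          _ ≤ dn / τ := hδs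
      have hb2 : -(c₀ * ‖x (n+1) - x n‖^2 + t n * (μ₀ * dn) / (4*c₀))
          ≤ t n * ⟪u, x (n+1) - x n⟫_ℝ := by
        have h1 : -(‖u‖ * ‖x (n+1) - x n‖) ≤ ⟪u, x (n+1) - x n⟫_ℝ :=
          (abs_le.mp (abs_real_inner_le_norm u _)).1
        have f1 : t n * (t n * ‖u‖^2) ≤ t n * (μ₀ * dn) := mul_le_mul_of_nonneg_left htub ht0
        have f3 : 4*c₀*(t n * (μ₀ * dn) / (4*c₀)) = t n*(μ₀*dn) := by field_simp
        have f4 : t n * (-(‖u‖ * ‖x (n+1) - x n‖)) ≤ t n * ⟪u, x (n+1) - x n⟫_ℝ :=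
          mul_le_mul_of_nonneg_left h1 ht0
        nlinarith [f1, f3, f4, sq_nonneg (2*c₀*‖x (n+1) - x n‖ - t n * ‖u‖), hc₀]
      -- combine
      have hkey : (vh - v n - ⟪ξ n, xh - x n⟫_ℝ) - (vh - v (n+1) - ⟪ξ (n+1), xh - x (n+1)⟫_ℝ)
          = (v (n+1) - v n - ⟪ξ n, x (n+1) - x n⟫_ℝ)
            + (-(t n * ⟪s, y - yδ⟫_ℝ) + t n * ⟪u, x (n+1) - x n⟫_ℝ + t n * dn) := by
        linear_combination hiden
      rw [hkey]
      have hd_lb : τ^2*δ^2/α n ≤ dn := by rw [div_le_iff₀ hαn]; nlinarith [hPn]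
      have h5 : min μ₀ μ₁ * dn ≤ t n * dn := mul_le_mul_of_nonneg_right htlb hd_pos.le
      have hA1 : (1 - 1/τ - μ₀/(4*c₀)) * (min μ₀ μ₁ * (τ^2*δ^2/α n))
          ≤ (1 - 1/τ - μ₀/(4*c₀)) * (min μ₀ μ₁ * dn) :=
        mul_le_mul_of_nonneg_left (mul_le_mul_of_nonneg_left hd_lb hmin01.le) hc₂.le
      have hA2 : (1 - 1/τ - μ₀/(4*c₀)) * (min μ₀ μ₁ * dn)
          ≤ (1 - 1/τ - μ₀/(4*c₀)) * (t n * dn) :=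
        mul_le_mul_of_nonneg_left h5 hc₂.le
      have hid : (1 - 1/τ - μ₀/(4*c₀)) * (t n * dn)
          = t n*dn - t n*(dn/τ) - t n*(μ₀*dn)/(4*c₀) := by
        field_simp
      have hid2 : ((1 - 1/τ - μ₀/(4*c₀)) * min μ₀ μ₁ * τ^2) * δ^2 * (1/α n)
          = (1 - 1/τ - μ₀/(4*c₀)) * (min μ₀ μ₁ * (τ^2*δ^2/α n)) := by ring
      rw [hid2]
      linarith [hDloc, hb1, hb2, hA1, hA2, hid]
    intro N hN
    induction N with
    | zero => simp
    | succ N ih =>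
      have hNN : ∀ n < N, ¬ (α n * ⟪B n (B n (A (x n) - yδ)), A (x n) - yδ⟫_ℝ ≤ τ ^ 2 * δ ^ 2) :=
        fun n hn => hN n (Nat.lt_succ_of_lt hn)
      have ihh := ih hNN
      have hstep := step N (hN N (Nat.lt_succ_self N))
      rw [Finset.sum_range_succ, mul_add]
      linarith
  -- the Bregman distance is nonnegative
  have hDnn : ∀ (xh : X) (vh : ℝ), Θ xh = (vh : EReal) → ∀ m : ℕ,
      0 ≤ vh - v m - ⟪ξ m, xh - x m⟫_ℝ := by
    intro xh vh hvh m
    have h := hargminR m xh vh hvh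
    have hsub : ⟪ξ m, xh - x m⟫_ℝ = ⟪ξ m, xh⟫_ℝ - ⟪ξ m, x m⟫_ℝ := inner_sub_right _ _ _
    linarith
  -- existence of a stopping index
  have hα0 : ∀ n, α n ≤ α 0 := by
    intro n
    induction n with
    | zero => exact le_rfl
    | succ k ih => exact (hαdec k).trans ih
  have hvh₀ : Θ xh₀ = (((Θ xh₀).toReal : ℝ) : EReal) := (EReal.coe_toReal hxh₀ (hbot _)).symm
  have hexists : ∃ n, α n * ⟪B n (B n (A (x n) - yδ)), A (x n) - yδ⟫_ℝ ≤ τ ^ 2 * δ ^ 2 := by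
    by_contra hno
    rw [not_exists] at hno
    set c3 : ℝ := ((1 - 1 / τ - μ₀ / (4 * c₀)) * min μ₀ μ₁ * τ ^ 2) * δ ^ 2 with hc3def
    have hc3 : 0 < c3 := by
      apply mul_pos _ (by positivity : (0:ℝ) < δ^2)
      exact mul_pos (mul_pos hc₂ hmin01) (pow_pos hτ0 2)
    have hpos : 0 < c3 * (1/α 0) := mul_pos hc3 (one_div_pos.mpr (hαpos 0))
    obtain ⟨N, hNgt⟩ := exists_nat_gt
      (((Θ xh₀).toReal - v 0 - ⟪ξ 0, xh₀ - x 0⟫_ℝ) / (c3 * (1/α 0)))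
    have h1 := main xh₀ (Θ xh₀).toReal hAxh₀ hvh₀ N (fun n _ => hno n)
    have hDN := hDnn xh₀ (Θ xh₀).toReal hvh₀ N
    have hsum : (N:ℝ) * (1/α 0) ≤ ∑ n ∈ Finset.range N, 1 / α n := by
      calc (N:ℝ) * (1/α 0) = ∑ _n ∈ Finset.range N, 1/α 0 := by
            rw [Finset.sum_const, Finset.card_range, nsmul_eq_mul]
        _ ≤ ∑ n ∈ Finset.range N, 1 / α n :=
            Finset.sum_le_sum fun i _ => one_div_le_one_div_of_le (hαpos i) (hα0 i)
    have h2 : c3 * ((N:ℝ) * (1/α 0)) ≤ (Θ xh₀).toReal - v 0 - ⟪ξ 0, xh₀ - x 0⟫_ℝ := by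
      calc c3 * ((N:ℝ) * (1/α 0)) ≤ c3 * ∑ n ∈ Finset.range N, 1 / α n :=
            mul_le_mul_of_nonneg_left hsum hc3.le
        _ ≤ _ := by linarith [h1, hDN]
    rw [div_lt_iff₀ hpos] at hNgt
    have h3 : c3 * ((N:ℝ) * (1/α 0)) = (N:ℝ) * (c3 * (1/α 0)) := by ring
    linarith
  refine ⟨Nat.find hexists, Nat.find_spec hexists, fun n hn => Nat.find_min hexists hn, ?_⟩
  intro xh hAxh hxhT
  have hvh : Θ xh = (((Θ xh).toReal : ℝ) : EReal) := (EReal.coe_toReal hxhT (hbot _)).symm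
  have h1 := main xh (Θ xh).toReal hAxh hvh (Nat.find hexists)
    (fun n hn => Nat.find_min hexists hn)
  have hDN := hDnn xh (Θ xh).toReal hvh (Nat.find hexists)
  rw [hvh, hv 0, ← EReal.coe_sub, ← EReal.coe_sub]
  exact_mod_cast (by linarith [h1, hDN] :
    ((1 - 1 / τ - μ₀ / (4 * c₀)) * min μ₀ μ₁ * τ ^ 2) * δ ^ 2
        * ∑ n ∈ Finset.range (Nat.find hexists), 1 / α n
      ≤ (Θ xh).toReal - v 0 - ⟪ξ 0, xh - x 0⟫_ℝ)
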